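/- arXiv:1910.06862 — 3 statements merged into one kernel-verified Lean document; each statement's English description precedes it below -/
import Mathlib

section
/- The policy π* defined by π*_n(a|x_{<n}) = γ*_n(a|x_{<n}) is a well-defined policy, its induced joint density satisfies π*(x) = γ*(x) for all x ∈ 𝕏, and its maximum-entropy value equals the log-normalizer: V^{π*} = log Z. -/
noncomputable section

/-- The unnormalized target density `γ̂(x) = exp (∑ₙ Rₙ(x_{≤n}))` (steps are
`0`-indexed, so `n : Fin N` corresponds to step `n+1`). -/
def gammaHat (N K : ℕ) (R : (n : Fin N) → (Fin (n.1 + 1) → Fin K) → ℝ)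
    (x : Fin N → Fin K) : ℝ :=
  Real.exp (∑ n : Fin N, R n (fun i => x (Fin.castLE n.isLt i)))

/-- The normalizer `Z = ∑ₓ γ̂(x)`. -/
def Z (N K : ℕ) (R : (n : Fin N) → (Fin (n.1 + 1) → Fin K) → ℝ) : ℝ :=
  ∑ x : Fin N → Fin K, gammaHat N K R x

/-- The normalized target density `γ*(x) = γ̂(x) / Z`. -/
def gammaStar (N K : ℕ) (R : (n : Fin N) → (Fin (n.1 + 1) → Fin K) → ℝ)
    (x : Fin N → Fin K) : ℝ :=
  gammaHat N K R x / Z N K R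

/-- The conditional density of the target:
`γ*ₙ(a | x_{<n}) = (∑_{y : y_{≤n} = x_{<n}∘a} γ*(y)) / (∑_{y : y_{<n} = x_{<n}} γ*(y))`. -/
def condStar (N K : ℕ) (R : (n : Fin N) → (Fin (n.1 + 1) → Fin K) → ℝ)
    (n : Fin N) (xp : Fin n.1 → Fin K) (a : Fin K) : ℝ :=
  (∑ y ∈ Finset.univ.filter (fun y : Fin N → Fin K =>
      (fun i : Fin (n.1 + 1) => y (Fin.castLE n.isLt i)) = Fin.snoc xp a),
      gammaStar N K R y) /
  (∑ y ∈ Finset.univ.filter (fun y : Fin N → Fin K =>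
      (fun i : Fin n.1 => y (Fin.castLE n.isLt.le i)) = xp),
      gammaStar N K R y)

/-- The joint density induced by a policy: `π(x) = ∏ₙ πₙ(xₙ | x_{<n})`. -/
def piJoint (N K : ℕ) (π : (n : Fin N) → (Fin n.1 → Fin K) → Fin K → ℝ)
    (x : Fin N → Fin K) : ℝ :=
  ∏ n : Fin N, π n (fun i => x (Fin.castLE n.isLt.le i)) (x n)

/-- Auxiliary: sum of `γ*` over completions of a prefix of length `m`. -/
def SAux (N K : ℕ) (R : (n : Fin N) → (Fin (n.1 + 1) → Fin K) → ℝ)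
    (m : ℕ) (hm : m ≤ N) (p : Fin m → Fin K) : ℝ :=
  ∑ y ∈ Finset.univ.filter (fun y : Fin N → Fin K =>
      (fun i : Fin m => y (Fin.castLE hm i)) = p), gammaStar N K R y

lemma prefix_succ_iff {N K : ℕ} (m : ℕ) (hm : m < N) (p : Fin m → Fin K) (a : Fin K)
    (y : Fin N → Fin K) :
    ((fun i : Fin (m+1) => y (Fin.castLE hm i)) = Fin.snoc p a) ↔
      ((fun i : Fin m => y (Fin.castLE hm.le i)) = p ∧ y ⟨m, hm⟩ = a) := by
  constructor
  · intro h
    refine ⟨funext fun i => ?_, ?_⟩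
    · have := congrFun h i.castSucc
      simpa [Fin.snoc_castSucc, Fin.castLE] using this
    · have := congrFun h (Fin.last m)
      rw [Fin.snoc_last] at this
      exact this
  · rintro ⟨h1, h2⟩
    funext i
    refine Fin.lastCases ?_ (fun j => ?_) i
    · rw [Fin.snoc_last]; exact h2
    · simpa [Fin.snoc_castSucc, Fin.castLE] using congrFun h1 j

lemma SAux_succ {N K : ℕ} (R : (n : Fin N) → (Fin (n.1 + 1) → Fin K) → ℝ)
    (m : ℕ) (hm : m < N) (p : Fin m → Fin K) :
    SAux N K R m hm.le p = ∑ a : Fin K, SAux N K R (m+1) hm (Fin.snoc p a) := by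
  unfold SAux
  simp only [Finset.sum_filter]
  rw [Finset.sum_comm]
  refine Finset.sum_congr rfl fun y _ => ?_
  simp only [prefix_succ_iff m hm p _ y]
  by_cases hP : (fun i : Fin m => y (Fin.castLE hm.le i)) = p
  · simp [hP]
  · simp [hP]

/-- **The target conditionals form the optimal policy.**
The policy `π*ₙ(a|x_{<n}) = γ*ₙ(a|x_{<n})` is a well-defined policy (each
conditional is a probability mass function on `Fin K`), its induced joint
density equals `γ*`, and its maximum-entropy value
`V^{π*} = ∑ₓ π*(x)·(log γ̂(x) − log π*(x))` equals `log Z`. -/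
theorem target_conditionals_optimal_policy (N K : ℕ) (hN : 0 < N) (hK : 0 < K)
    (R : (n : Fin N) → (Fin (n.1 + 1) → Fin K) → ℝ) :
    (∀ (n : Fin N) (xp : Fin n.1 → Fin K) (a : Fin K), 0 ≤ condStar N K R n xp a) ∧
    (∀ (n : Fin N) (xp : Fin n.1 → Fin K), ∑ a, condStar N K R n xp a = 1) ∧
    (∀ x : Fin N → Fin K, piJoint N K (condStar N K R) x = gammaStar N K R x) ∧
    (∑ x : Fin N → Fin K,
        piJoint N K (condStar N K R) x *
          (Real.log (gammaHat N K R x) - Real.log (piJoint N K (condStar N K R) x)) =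
      Real.log (Z N K R)) := by
  haveI : NeZero K := ⟨hK.ne'⟩
  have hγ : ∀ x, 0 < gammaHat N K R x := fun x => Real.exp_pos _
  have hZ : 0 < Z N K R := Finset.sum_pos (fun x _ => hγ x) Finset.univ_nonempty
  have hγs : ∀ x, 0 < gammaStar N K R x := fun x => div_pos (hγ x) hZ
  -- positivity of SAux
  have hS : ∀ (m : ℕ) (hm : m ≤ N) (p : Fin m → Fin K), 0 < SAux N K R m hm p := by
    intro m hm p
    refine Finset.sum_pos (fun y _ => hγs y) ?_
    refine ⟨fun j => if h : j.1 < m then p ⟨j.1, h⟩ else ⟨0, hK⟩, ?_⟩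
    simp only [Finset.mem_filter, Finset.mem_univ, true_and]
    funext i
    simp [Fin.castLE, i.isLt]
  have hcond : ∀ (n : Fin N) (xp : Fin n.1 → Fin K) (a : Fin K),
      condStar N K R n xp a = SAux N K R (n.1+1) n.isLt (Fin.snoc xp a) / SAux N K R n.1 n.isLt.le xp :=
    fun _ _ _ => rfl
  have h1 : ∀ (n : Fin N) (xp : Fin n.1 → Fin K) (a : Fin K), 0 ≤ condStar N K R n xp a := by
    intro n xp a
    rw [hcond]
    exact div_nonneg (hS _ _ _).le (hS _ _ _).le
  have h2 : ∀ (n : Fin N) (xp : Fin n.1 → Fin K), ∑ a, condStar N K R n xp a = 1 := by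
    intro n xp
    simp only [hcond]
    rw [← Finset.sum_div, ← SAux_succ R n.1 n.isLt xp, div_self (hS _ _ _).ne']
  -- T telescoping
  have h3 : ∀ x : Fin N → Fin K, piJoint N K (condStar N K R) x = gammaStar N K R x := by
    intro x
    set T : ℕ → ℝ := fun m => if hm : m ≤ N then SAux N K R m hm (fun i => x (Fin.castLE hm i)) else 1 with hT
    have hTpos : ∀ m, 0 < T m := by
      intro m
      by_cases hm : m ≤ N
      · simp only [hT, dif_pos hm]; exact hS _ _ _
      · simp [hT, dif_neg hm]
    have hstep : piJoint N K (condStar N K R) x = ∏ i ∈ Finset.range N, (T (i+1) / T i) := by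
      rw [← Fin.prod_univ_eq_prod_range (fun i => T (i+1) / T i) N]
      unfold piJoint
      refine Finset.prod_congr rfl fun n _ => ?_
      rw [hcond]
      have e1 : Fin.snoc (fun i : Fin n.1 => x (Fin.castLE n.isLt.le i)) (x n)
          = fun i : Fin (n.1+1) => x (Fin.castLE n.isLt i) := by
        funext i
        refine Fin.lastCases ?_ (fun j => ?_) i
        · rw [Fin.snoc_last]; rfl
        · rw [Fin.snoc_castSucc]; rfl
      rw [e1]
      simp only [hT, dif_pos (Nat.succ_le_of_lt n.isLt), dif_pos n.isLt.le]
    have htel : ∀ m, m ≤ N → ∏ i ∈ Finset.range m, (T (i+1) / T i) = T m / T 0 := by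
      intro m
      induction m with
      | zero => intro _; simp [div_self (hTpos 0).ne']
      | succ k ih =>
        intro hk
        rw [Finset.prod_range_succ, ih (Nat.le_of_succ_le hk)]
        have h0 := (hTpos 0).ne'
        have hkne := (hTpos k).ne'
        field_simp
    have hT0 : T 0 = 1 := by
      simp only [hT, dif_pos (Nat.zero_le N)]
      unfold SAux
      have : Finset.univ.filter (fun y : Fin N → Fin K =>
          (fun i : Fin 0 => y (Fin.castLE (Nat.zero_le N) i)) = fun i => x (Fin.castLE (Nat.zero_le N) i)) = Finset.univ := by
        refine Finset.filter_true_of_mem fun y _ => ?_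
        funext i; exact i.elim0
      rw [this]
      unfold gammaStar
      rw [← Finset.sum_div]
      exact div_self hZ.ne'
    have hTN : T N = gammaStar N K R x := by
      simp only [hT, dif_pos (le_refl N)]
      unfold SAux
      have : Finset.univ.filter (fun y : Fin N → Fin K =>
          (fun i : Fin N => y (Fin.castLE (le_refl N) i)) = fun i => x (Fin.castLE (le_refl N) i)) = {x} := by
        ext y
        simp only [Finset.mem_filter, Finset.mem_univ, true_and, Finset.mem_singleton]
        constructor
        · intro h; funext i; have := congrFun h i; simpa [Fin.castLE] using this
        · intro h; subst h; rfl
      rw [this, Finset.sum_singleton]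
    rw [hstep, htel N le_rfl, hT0, hTN, div_one]
  refine ⟨h1, h2, h3, ?_⟩
  have hlog : ∀ x : Fin N → Fin K,
      Real.log (gammaHat N K R x) - Real.log (gammaStar N K R x) = Real.log (Z N K R) := by
    intro x
    unfold gammaStar
    rw [Real.log_div (hγ x).ne' hZ.ne']
    ring
  calc ∑ x : Fin N → Fin K,
        piJoint N K (condStar N K R) x *
          (Real.log (gammaHat N K R x) - Real.log (piJoint N K (condStar N K R) x))
      = ∑ x : Fin N → Fin K, gammaStar N K R x * Real.log (Z N K R) := by
        refine Finset.sum_congr rfl fun x _ => ?_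
        rw [h3 x, hlog x]
    _ = Real.log (Z N K R) := by
        rw [← Finset.sum_mul]
        have hsum1 : ∑ x : Fin N → Fin K, gammaStar N K R x = 1 := by
          unfold gammaStar
          rw [← Finset.sum_div]
          exact div_self hZ.ne'
        rw [hsum1, one_mul]
end
end

section
/- For every n ∈ {1,…,N}, every prefix x_{<n} of length n−1, and every a ∈ Fin K, the conditional of the target equals the softmax of the optimal state-action values: γ*_n(a|x_{<n}) = exp(Q*_n(a|x_{<n}) − V*_n(x_{<n})). -/
noncomputable section

/-- Extend a prefix `xp` of length `n` by a completion `c` of the remaining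
`N - n` coordinates to a full configuration in `𝕏 = Fin N → Fin K`. -/
def extendPrefix (N K n : ℕ) (hn : n ≤ N) (xp : Fin n → Fin K)
    (c : Fin (N - n) → Fin K) : Fin N → Fin K :=
  fun i => if h : i.1 < n then xp ⟨i.1, h⟩ else c ⟨i.1 - n, by omega⟩

/-- The optimal value of a prefix `xp` of length `n` (`0 ≤ n ≤ N`):
`V*_{n+1}(x_{≤n}) = log ∑_{completions} exp (∑_{n' > n} R_{n'}(x_{≤n'}))`
(steps are `0`-indexed here: `n' : Fin N` corresponds to step `n'+1`, so the
sum ranges over the indices `n' : Fin N` with `n ≤ n'`). -/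
def Vstar (N K : ℕ) (R : (n : Fin N) → (Fin (n.1 + 1) → Fin K) → ℝ)
    (n : ℕ) (hn : n ≤ N) (xp : Fin n → Fin K) : ℝ :=
  Real.log (∑ c : Fin (N - n) → Fin K,
    Real.exp (∑ n' ∈ Finset.univ.filter (fun n' : Fin N => n ≤ n'.1),
      R n' (fun i => extendPrefix N K n hn xp c (Fin.castLE n'.isLt i))))

/-- The optimal state-action value
`Q*ₙ(a | x_{<n}) = Rₙ(x_{<n}∘a) + V*_{n+1}(x_{<n}∘a)`. -/
def Qstar (N K : ℕ) (R : (n : Fin N) → (Fin (n.1 + 1) → Fin K) → ℝ)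
    (n : Fin N) (xp : Fin n.1 → Fin K) (a : Fin K) : ℝ :=
  R n (Fin.snoc xp a) + Vstar N K R (n.1 + 1) n.isLt (Fin.snoc xp a)

/-- Auxiliary: the reward accumulated along the prefix `xp` (steps `n' < n`),
computed via a dummy completion. -/
def Apre (N K : ℕ) (hK : 0 < K) (R : (n : Fin N) → (Fin (n.1 + 1) → Fin K) → ℝ)
    (n : ℕ) (hn : n ≤ N) (xp : Fin n → Fin K) : ℝ :=
  ∑ n' ∈ Finset.univ.filter (fun n' : Fin N => n'.1 < n),
    R n' (fun i => extendPrefix N K n hn xp (fun _ => ⟨0, hK⟩) (Fin.castLE n'.isLt i))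

lemma extendPrefix_prefix_indep (N K : ℕ) (n : ℕ) (hn : n ≤ N)
    (xp : Fin n → Fin K) (c d : Fin (N - n) → Fin K) (n' : Fin N) (hn' : n'.1 < n) :
    (fun i : Fin (n'.1 + 1) => extendPrefix N K n hn xp c (Fin.castLE n'.isLt i)) =
    (fun i : Fin (n'.1 + 1) => extendPrefix N K n hn xp d (Fin.castLE n'.isLt i)) := by
  funext i
  have hi : (i : ℕ) < n := by have := i.isLt; omega
  simp [extendPrefix, Fin.castLE, hi]

lemma sum_filter_gammaHat (N K : ℕ) (R : (n : Fin N) → (Fin (n.1 + 1) → Fin K) → ℝ)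
    (n : ℕ) (hn : n ≤ N) (xp : Fin n → Fin K) :
    (∑ y ∈ Finset.univ.filter (fun y : Fin N → Fin K =>
        (fun i : Fin n => y (Fin.castLE hn i)) = xp), gammaHat N K R y)
    = ∑ c : Fin (N - n) → Fin K, gammaHat N K R (extendPrefix N K n hn xp c) := by
  have hrec : ∀ y ∈ Finset.univ.filter (fun y : Fin N → Fin K =>
      (fun i : Fin n => y (Fin.castLE hn i)) = xp),
      extendPrefix N K n hn xp (fun j : Fin (N - n) => y ⟨n + j.1, by omega⟩) = y := by
    intro y hy
    simp only [Finset.mem_filter, Finset.mem_univ, true_and] at hy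
    funext i
    by_cases h : i.1 < n
    · have := congrFun hy ⟨i.1, h⟩
      simpa [extendPrefix, h, Fin.castLE] using this.symm
    · simp only [extendPrefix, h, dif_neg, not_false_iff]
      exact congrArg y (Fin.ext (show n + (i.1 - n) = i.1 by omega))
  refine Finset.sum_nbij' (i := fun y => fun j : Fin (N - n) => y ⟨n + j.1, by omega⟩)
    (j := fun c => extendPrefix N K n hn xp c) ?_ ?_ ?_ ?_ ?_
  · intro y hy; simp
  · intro c hc
    simp only [Finset.mem_filter, Finset.mem_univ, true_and]
    funext i
    have hi : (Fin.castLE hn i).1 < n := i.isLt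
    simp [extendPrefix, hi]
  · intro y hy
    exact hrec y hy
  · intro c hc
    funext j
    have h : ¬ (n + j.1 < n) := by omega
    simp only [extendPrefix, h, dif_neg, not_false_iff]
    exact congrArg c (Fin.ext (show n + j.1 - n = j.1 by omega))
  · intro y hy
    exact (congrArg (gammaHat N K R) (hrec y hy)).symm

lemma key_sum (N K : ℕ) (hK : 0 < K) (R : (n : Fin N) → (Fin (n.1 + 1) → Fin K) → ℝ)
    (n : ℕ) (hn : n ≤ N) (xp : Fin n → Fin K) :
    (∑ y ∈ Finset.univ.filter (fun y : Fin N → Fin K =>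
        (fun i : Fin n => y (Fin.castLE hn i)) = xp), gammaHat N K R y)
    = Real.exp (Apre N K hK R n hn xp) * Real.exp (Vstar N K R n hn xp) := by
  rw [sum_filter_gammaHat]
  have hpos : (0:ℝ) < ∑ c : Fin (N - n) → Fin K,
      Real.exp (∑ n' ∈ Finset.univ.filter (fun n' : Fin N => n ≤ n'.1),
        R n' (fun i => extendPrefix N K n hn xp c (Fin.castLE n'.isLt i))) := by
    have : Nonempty (Fin (N - n) → Fin K) := ⟨fun _ => ⟨0, hK⟩⟩
    exact Finset.sum_pos (fun c _ => Real.exp_pos _) Finset.univ_nonempty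
  rw [Vstar, Real.exp_log hpos, Finset.mul_sum]
  apply Finset.sum_congr rfl
  intro c _
  rw [gammaHat, ← Real.exp_add]
  congr 1
  rw [← Finset.sum_filter_add_sum_filter_not Finset.univ (fun n' : Fin N => n'.1 < n)]
  congr 1
  · apply Finset.sum_congr rfl
    intro n' hn'
    simp only [Finset.mem_filter, Finset.mem_univ, true_and] at hn'
    exact congrArg (R n') (extendPrefix_prefix_indep N K n hn xp c _ n' hn')
  · apply Finset.sum_congr
    · ext n'; simp [not_lt]
    · intro n' _; rfl

lemma Apre_succ (N K : ℕ) (hK : 0 < K) (R : (n : Fin N) → (Fin (n.1 + 1) → Fin K) → ℝ)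
    (n : Fin N) (xp : Fin n.1 → Fin K) (a : Fin K) :
    Apre N K hK R (n.1 + 1) n.isLt (Fin.snoc xp a)
      = Apre N K hK R n.1 n.isLt.le xp + R n (Fin.snoc xp a) := by
  unfold Apre
  have hfil : Finset.univ.filter (fun n' : Fin N => n'.1 < n.1 + 1)
      = insert n (Finset.univ.filter (fun n' : Fin N => n'.1 < n.1)) := by
    ext n'
    simp only [Finset.mem_filter, Finset.mem_univ, true_and, Finset.mem_insert]
    constructor
    · intro h
      rcases Nat.lt_succ_iff_lt_or_eq.mp h with h | h
      · exact Or.inr (by simpa using h)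
      · exact Or.inl (Fin.ext h)
    · rintro (rfl | h)
      · omega
      · simp at h; omega
  rw [hfil, Finset.sum_insert (by simp)]
  have h1 : (R n fun i => extendPrefix N K (n.1 + 1) n.isLt (Fin.snoc xp a)
      (fun _ => ⟨0, hK⟩) (Fin.castLE n.isLt i)) = R n (Fin.snoc xp a) := by
    congr 1
    funext i
    have hi : (i : ℕ) < n.1 + 1 := i.isLt
    simp [extendPrefix, Fin.castLE, hi, Fin.eta]
  have h2 : (∑ n' ∈ Finset.univ.filter (fun n' : Fin N => n'.1 < n.1),
        R n' (fun i => extendPrefix N K (n.1 + 1) n.isLt (Fin.snoc xp a)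
          (fun _ => ⟨0, hK⟩) (Fin.castLE n'.isLt i)))
      = ∑ n' ∈ Finset.univ.filter (fun n' : Fin N => n'.1 < n.1),
        R n' (fun i => extendPrefix N K n.1 n.isLt.le xp
          (fun _ => ⟨0, hK⟩) (Fin.castLE n'.isLt i)) := by
    apply Finset.sum_congr rfl
    intro n' hn'
    simp only [Finset.mem_filter, Finset.mem_univ, true_and] at hn'
    congr 1
    funext i
    have hi1 : (i : ℕ) < n.1 + 1 := by have := i.isLt; omega
    have hi2 : (i : ℕ) < n.1 := by have := i.isLt; omega
    simp [extendPrefix, Fin.castLE, Fin.snoc, hi1, hi2]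
  rw [h1, h2, add_comm]

lemma Z_pos (N K : ℕ) (hK : 0 < K) (R : (n : Fin N) → (Fin (n.1 + 1) → Fin K) → ℝ) :
    0 < Z N K R := by
  have : Nonempty (Fin N → Fin K) := ⟨fun _ => ⟨0, hK⟩⟩
  exact Finset.sum_pos (fun x _ => Real.exp_pos _) Finset.univ_nonempty

/-- **Target conditionals are the softmax of the optimal state-action values:**
for every step `n`, prefix `x_{<n}` and action `a`,
`γ*ₙ(a|x_{<n}) = exp (Q*ₙ(a|x_{<n}) − V*ₙ(x_{<n}))`. -/
theorem cond_eq_exp_qstar_sub_vstar (N K : ℕ) (hN : 0 < N) (hK : 0 < K)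
    (R : (n : Fin N) → (Fin (n.1 + 1) → Fin K) → ℝ)
    (n : Fin N) (xp : Fin n.1 → Fin K) (a : Fin K) :
    condStar N K R n xp a =
      Real.exp (Qstar N K R n xp a - Vstar N K R n.1 n.isLt.le xp) := by
  unfold condStar
  have hnum := key_sum N K hK R (n.1 + 1) n.isLt (Fin.snoc xp a)
  have hden := key_sum N K hK R n.1 n.isLt.le xp
  have hZ := Z_pos N K hK R
  simp only [gammaStar, ← Finset.sum_div]
  rw [hnum, hden, Apre_succ N K hK R n xp a]
  have hcancel : ∀ x y : ℝ, x / Z N K R / (y / Z N K R) = x / y := by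
    intro x y
    rcases eq_or_ne y 0 with rfl | hy
    · simp
    · field_simp
  rw [hcancel]
  rw [← Real.exp_add, ← Real.exp_add, ← Real.exp_sub, Qstar]
  congr 1
  ring
end
end

section
/- Correctness of ancestral sampling from the optimal policy: for every x ∈ 𝕏, ∏_{n=1}^N exp(Q*_n(x_n|x_{<n}) − V*_n(x_{<n})) = γ*(x); that is, sampling each coordinate sequentially from the softmax of the optimal state-action values yields exactly the normalized target density. -/
noncomputable section

/-- Telescoping product helper. -/
lemma prod_telescope_aux (f A : ℕ → ℝ) (hf : ∀ n, f n ≠ 0) (m : ℕ) :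
    ∏ n ∈ Finset.range m, (A n * f (n + 1) / f n) =
      (∏ n ∈ Finset.range m, A n) * f m / f 0 := by
  induction m with
  | zero => simp [div_self (hf 0)]
  | succ m ih =>
      rw [Finset.prod_range_succ, ih, Finset.prod_range_succ]
      have h1 := hf m
      have h2 := hf 0
      field_simp

/-- The running value function along `x`. -/
def Tfun (N K : ℕ) (R : (n : Fin N) → (Fin (n.1 + 1) → Fin K) → ℝ)
    (x : Fin N → Fin K) : ℕ → ℝ := fun m =>
  if h : m ≤ N then Real.exp (Vstar N K R m h (fun i => x (Fin.castLE h i))) else 1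

/-- The per-step reward factor along `x`. -/
def Afun (N K : ℕ) (R : (n : Fin N) → (Fin (n.1 + 1) → Fin K) → ℝ)
    (x : Fin N → Fin K) : ℕ → ℝ := fun m =>
  if h : m < N then Real.exp (R ⟨m, h⟩ (fun i => x (Fin.castLE h i))) else 1

lemma Tfun_pos (N K : ℕ) (R : (n : Fin N) → (Fin (n.1 + 1) → Fin K) → ℝ)
    (x : Fin N → Fin K) (m : ℕ) : 0 < Tfun N K R x m := by
  unfold Tfun
  split
  · exact Real.exp_pos _
  · exact one_pos

lemma snoc_prefix (N K : ℕ) (x : Fin N → Fin K) (n : Fin N) :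
    (Fin.snoc (fun i => x (Fin.castLE n.isLt.le i)) (x n) : Fin (n.1 + 1) → Fin K) =
      fun i => x (Fin.castLE n.isLt i) := by
  funext i
  rcases i with ⟨v, hv⟩
  by_cases h : v < n.1
  · simp only [Fin.snoc, h, dif_pos, cast_eq]
    congr 1
  · have hvn : v = n.1 := by omega
    subst hvn
    simp only [Fin.snoc, h, dif_neg, cast_eq]
    congr 1

/-- **Correctness of ancestral sampling from the optimal policy:**
for every `x ∈ 𝕏`, `∏ₙ exp (Q*ₙ(xₙ|x_{<n}) − V*ₙ(x_{<n})) = γ*(x)`;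
sampling each coordinate from the softmax of the optimal state-action values
yields exactly the normalized target density. -/
theorem ancestral_sampling_correct (N K : ℕ) (hN : 0 < N) (hK : 0 < K)
    (R : (n : Fin N) → (Fin (n.1 + 1) → Fin K) → ℝ) (x : Fin N → Fin K) :
    ∏ n : Fin N,
        Real.exp (Qstar N K R n (fun i => x (Fin.castLE n.isLt.le i)) (x n) -
          Vstar N K R n.1 n.isLt.le (fun i => x (Fin.castLE n.isLt.le i))) =
      gammaStar N K R x := by
  haveI : Nonempty (Fin K) := ⟨⟨0, hK⟩⟩
  set T := Tfun N K R x with hT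
  set A := Afun N K R x with hA
  have hTne : ∀ m, T m ≠ 0 := fun m => (Tfun_pos N K R x m).ne'
  -- each factor equals `A n * T (n+1) / T n`
  have key : ∀ n : Fin N,
      Real.exp (Qstar N K R n (fun i => x (Fin.castLE n.isLt.le i)) (x n) -
          Vstar N K R n.1 n.isLt.le (fun i => x (Fin.castLE n.isLt.le i))) =
        A n.1 * T (n.1 + 1) / T n.1 := by
    intro n
    rw [Real.exp_sub, Qstar, snoc_prefix, Real.exp_add, hT, hA]
    unfold Tfun Afun
    rw [dif_pos n.isLt, dif_pos (show n.1 + 1 ≤ N from n.isLt),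
      dif_pos (show n.1 ≤ N from n.isLt.le)]
  -- the product of the reward factors is `gammaHat`
  have hAprod : (∏ m ∈ Finset.range N, A m) = gammaHat N K R x := by
    rw [← Fin.prod_univ_eq_prod_range, gammaHat, Real.exp_sum]
    refine Finset.prod_congr rfl fun n _ => ?_
    rw [hA]; unfold Afun
    rw [dif_pos n.isLt]
  -- `T N = 1`
  have hTN : T N = 1 := by
    rw [hT]; unfold Tfun
    rw [dif_pos le_rfl, Vstar]
    have hfil : (Finset.univ.filter (fun n' : Fin N => N ≤ n'.1)) = ∅ := by
      refine Finset.filter_false_of_mem fun n' _ => ?_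
      exact Nat.not_le.mpr n'.isLt
    have : (∑ c : Fin (N - N) → Fin K,
        Real.exp (∑ n' ∈ Finset.univ.filter (fun n' : Fin N => N ≤ n'.1),
          R n' (fun i => extendPrefix N K N le_rfl (fun i => x (Fin.castLE le_rfl i)) c
            (Fin.castLE n'.isLt i)))) = 1 := by
      rw [hfil]
      simp only [Finset.sum_empty, Real.exp_zero]
      rw [Finset.sum_const, Finset.card_univ, nsmul_eq_mul, mul_one]
      have : Fintype.card (Fin (N - N) → Fin K) = 1 := by
        rw [Fintype.card_fun]
        simp [Nat.sub_self]
      rw [this]; norm_num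
    rw [this, Real.log_one, Real.exp_zero]
  -- `T 0 = Z`
  have hT0 : T 0 = Z N K R := by
    rw [hT]; unfold Tfun
    rw [dif_pos (Nat.zero_le N), Vstar]
    have hfil : (Finset.univ.filter (fun n' : Fin N => 0 ≤ n'.1)) = Finset.univ := by
      simp
    have hsum : (∑ c : Fin (N - 0) → Fin K,
        Real.exp (∑ n' ∈ Finset.univ.filter (fun n' : Fin N => 0 ≤ n'.1),
          R n' (fun i => extendPrefix N K 0 (Nat.zero_le N) (fun i => x (Fin.castLE (Nat.zero_le N) i)) c
            (Fin.castLE n'.isLt i)))) = Z N K R := by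
      rw [hfil, Z]
      show (∑ c : Fin N → Fin K, _) = _
      refine Finset.sum_congr rfl fun c _ => ?_
      rw [gammaHat]
      congr 1
    rw [hsum]
    have hZ : 0 < Z N K R := by
      refine Finset.sum_pos (fun y _ => Real.exp_pos _) Finset.univ_nonempty
    exact Real.exp_log hZ
  calc ∏ n : Fin N,
        Real.exp (Qstar N K R n (fun i => x (Fin.castLE n.isLt.le i)) (x n) -
          Vstar N K R n.1 n.isLt.le (fun i => x (Fin.castLE n.isLt.le i)))
      = ∏ n : Fin N, (fun m => A m * T (m + 1) / T m) n.1 :=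
        Finset.prod_congr rfl fun n _ => key n
    _ = ∏ m ∈ Finset.range N, (A m * T (m + 1) / T m) := by
        exact Fin.prod_univ_eq_prod_range (fun m => A m * T (m + 1) / T m) N
    _ = (∏ m ∈ Finset.range N, A m) * T N / T 0 := prod_telescope_aux T A hTne N
    _ = gammaHat N K R x * 1 / Z N K R := by rw [hAprod, hTN, hT0]
    _ = gammaStar N K R x := by rw [gammaStar, mul_one]
end
end
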